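/- Over the field 𝔽₂ with two elements, the set of formal power series f ∈ 𝔽₂[[X]] satisfying (1+X)³ f² + (1+X)² f + X = 0 has exactly two elements; moreover these two solutions are distinguished by their constant terms, one having constant term 0 and the other constant term 1. -/

import Mathlib

open PowerSeries

namespace TwoSolutionsAux

/-- Coefficients of the canonical solution. -/
def a : ℕ → ZMod 2
  | 0 => 0
  | (n+1) => if (n+1) % 2 = 1 then 1 else 1 + a ((n+1)/2)
  decreasing_by exact Nat.div_lt_self (Nat.succ_pos n) one_lt_two

lemma a_zero : a 0 = 0 := by simp [a]

lemma a_odd (m : ℕ) : a (2*m+1) = 1 := by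
  have h : (2*m+1) % 2 = 1 := by omega
  rw [a, if_pos h]

lemma a_two_mul (m : ℕ) (hm : m ≠ 0) : a (2*m) = 1 + a m := by
  rcases m with _ | k
  · exact absurd rfl hm
  · rw [show 2*(k+1) = (2*k+1)+1 by ring, a]
    have h1 : ((2*k+1)+1) % 2 = 0 := by omega
    have h2 : ((2*k+1)+1) / 2 = k + 1 := by omega
    simp [h1, h2]


lemma mul_self_z2 : ∀ x : ZMod 2, x * x = x := by decide
lemma add_self_z2 : ∀ x : ZMod 2, x + x = 0 := by decide

lemma coeff_sq (g : PowerSeries (ZMod 2)) (n : ℕ) :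
    PowerSeries.coeff n (g ^ 2)
      = if 2 ∣ n then PowerSeries.coeff (n / 2) g else 0 := by
  classical
  rw [sq, PowerSeries.coeff_mul]
  by_cases h : 2 ∣ n
  · obtain ⟨m, rfl⟩ := h
    rw [if_pos ⟨m, rfl⟩]
    have hmm : (m, m) ∈ Finset.HasAntidiagonal.antidiagonal (2*m) := by
      rw [Finset.HasAntidiagonal.mem_antidiagonal]; omega
    rw [← Finset.add_sum_erase _ _ hmm]
    have h0 : ∑ p ∈ (Finset.HasAntidiagonal.antidiagonal (2*m)).erase (m,m),
        PowerSeries.coeff p.1 g * PowerSeries.coeff p.2 g = 0 := by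
      apply Finset.sum_involution (fun p _ => (p.2, p.1))
      · intro p hp
        rw [mul_comm]
        exact add_self_z2 _
      · intro p hp _ hq
        have h1 := Finset.mem_of_mem_erase hp
        rw [Finset.HasAntidiagonal.mem_antidiagonal] at h1
        have h2 := Finset.ne_of_mem_erase hp
        apply h2
        have : p.2 = p.1 := congrArg Prod.fst hq
        have hpm : p.1 = m := by omega
        have hpm2 : p.2 = m := by omega
        exact Prod.ext hpm hpm2
      · intro p hp
        have h1 := Finset.mem_of_mem_erase hp
        rw [Finset.HasAntidiagonal.mem_antidiagonal] at h1
        have h2 := Finset.ne_of_mem_erase hp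
        apply Finset.mem_erase_of_ne_of_mem
        · intro hq
          apply h2
          have e1 : p.2 = m := congrArg Prod.fst hq
          have e2 : p.1 = m := congrArg Prod.snd hq
          exact Prod.ext e2 e1
        · rw [Finset.HasAntidiagonal.mem_antidiagonal]; omega
      · intro p hp; rfl
    rw [h0, add_zero, show 2*m/2 = m by omega]
    exact mul_self_z2 _
  · rw [if_neg h]
    apply Finset.sum_involution (fun p _ => (p.2, p.1))
    · intro p hp
      rw [mul_comm]
      exact add_self_z2 _
    · intro p hp _ hq
      rw [Finset.HasAntidiagonal.mem_antidiagonal] at hp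
      have : p.2 = p.1 := congrArg Prod.fst hq
      exact h ⟨p.1, by omega⟩
    · intro p hp
      rw [Finset.HasAntidiagonal.mem_antidiagonal] at hp ⊢
      omega
    · intro p hp; rfl

/-- The canonical solution of `g² + g = X/(1+X)`. -/
noncomputable def g0 : PowerSeries (ZMod 2) := PowerSeries.mk a

lemma hb (n : ℕ) :
    PowerSeries.coeff n (g0 ^ 2 + g0) = if n = 0 then 0 else 1 := by
  rw [map_add, coeff_sq]
  rcases Nat.even_or_odd n with ⟨m, rfl⟩ | ⟨m, rfl⟩
  · by_cases hm : m = 0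
    · subst hm
      simp [g0, a_zero]
    · have hdvd : 2 ∣ (m + m) := ⟨m, by omega⟩
      rw [if_pos hdvd, if_neg (by omega : ¬ (m + m = 0)),
        show (m+m)/2 = m by omega, g0, PowerSeries.coeff_mk, PowerSeries.coeff_mk,
        show m + m = 2*m by omega, a_two_mul m hm,
        add_comm 1 (a m), ← add_assoc, add_self_z2, zero_add]
  · rw [if_neg (by omega : ¬ 2 ∣ 2*m+1), if_neg (by omega : ¬ (2*m+1 = 0)),
      zero_add, g0, PowerSeries.coeff_mk, a_odd]

lemma key : (1 + PowerSeries.X) * (g0 ^ 2 + g0) = PowerSeries.X := by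
  ext n
  rw [add_mul, one_mul, map_add]
  rcases n with _ | k
  · simp [hb]
  · rw [PowerSeries.coeff_succ_X_mul, hb, hb, PowerSeries.coeff_X]
    rcases k with _ | j
    · norm_num
    · rw [if_neg (by omega : ¬ (j + 1 + 1 = 0)), if_neg (by omega : ¬ (j + 1 = 0)),
        if_neg (by omega : ¬ (j + 1 + 1 = 1)), add_self_z2]

end TwoSolutionsAux

open TwoSolutionsAux
/-- **Example 1 of the paper.**  Over `𝔽₂`, the equation
`(1+X)³ f² + (1+X)² f + X = 0` has exactly two formal power series solutions,
one with constant term `0` and the other with constant term `1`. -/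
theorem two_solutions_example_one :
    ∃ f g : PowerSeries (ZMod 2),
      {h : PowerSeries (ZMod 2) |
          (1 + PowerSeries.X) ^ 3 * h ^ 2 + (1 + PowerSeries.X) ^ 2 * h
            + PowerSeries.X = 0} = {f, g} ∧
      PowerSeries.constantCoeff f = 0 ∧
      PowerSeries.constantCoeff g = 1 := by
  classical
  set u : PowerSeries (ZMod 2) := 1 + PowerSeries.X with hu_def
  have two0 : (2 : PowerSeries (ZMod 2)) = 0 := by
    rw [show (2 : PowerSeries (ZMod 2)) = (C 2 : PowerSeries (ZMod 2)) from (map_ofNat _ 2).symm,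
      show (2 : ZMod 2) = 0 from rfl, map_zero]
  have neg_eq : ∀ p : PowerSeries (ZMod 2), -p = p := by
    intro p; linear_combination (-p) * two0
  have hcc : constantCoeff u = 1 := by simp [hu_def]
  have hu0 : u ≠ 0 := by
    intro h
    rw [h, map_zero] at hcc
    exact zero_ne_one hcc
  have huinv : u * u⁻¹ = 1 := PowerSeries.mul_inv_cancel u (by rw [hcc]; exact one_ne_zero)
  refine ⟨u⁻¹ * g0, u⁻¹ * (g0 + 1), ?_, ?_, ?_⟩
  · ext h
    simp only [Set.mem_setOf_eq, Set.mem_insert_iff, Set.mem_singleton_iff]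
    have hrw : u ^ 3 * h ^ 2 + u ^ 2 * h + PowerSeries.X
        = u * ((u * h) ^ 2 + u * h) + PowerSeries.X := by ring
    constructor
    · intro hmem
      rw [hrw] at hmem
      have hGX : u * ((u * h) ^ 2 + u * h) = PowerSeries.X := by
        have := eq_neg_of_add_eq_zero_left hmem
        rw [neg_eq] at this
        exact this
      have hsame : (u * h) ^ 2 + u * h = g0 ^ 2 + g0 := by
        have := hGX.trans key.symm
        exact mul_left_cancel₀ hu0 this
      set y : PowerSeries (ZMod 2) := u * h + g0 with hy
      have hy2 : y * (y + 1) = 0 := by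
        have : y * (y + 1) = ((u*h)^2 + u*h) - (g0^2 + g0) + 2 * ((u*h)*g0 + g0*g0 + g0) := by
          rw [hy]; ring
        rw [this, hsame, sub_self, two0, zero_mul, zero_add]
      rcases mul_eq_zero.mp hy2 with h0 | h1
      · left
        have h00 : u * h + g0 = 0 := by rw [← hy, h0]
        have hG : u * h = g0 := by
          have := eq_neg_of_add_eq_zero_left h00
          rw [neg_eq] at this
          exact this
        rw [← hG, ← mul_assoc, mul_comm u⁻¹ u, huinv, one_mul]
      · right
        have hyval : y = 1 := by
          have := eq_neg_of_add_eq_zero_left h1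
          rw [neg_eq] at this
          exact this
        have h2 : u * h + g0 = 1 := by rw [← hy, hyval]
        have hG : u * h = g0 + 1 := by
          linear_combination h2 + (-g0) * two0
        rw [← hG, ← mul_assoc, mul_comm u⁻¹ u, huinv, one_mul]
    · intro hmem
      rw [hrw]
      rcases hmem with rfl | rfl
      · have hug : u * (u⁻¹ * g0) = g0 := by rw [← mul_assoc, huinv, one_mul]
        rw [hug]
        linear_combination key + PowerSeries.X * two0
      · have hug : u * (u⁻¹ * (g0 + 1)) = g0 + 1 := by rw [← mul_assoc, huinv, one_mul]
        rw [hug]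
        linear_combination key + (PowerSeries.X + u * (g0 + 1)) * two0
  · rw [map_mul, PowerSeries.constantCoeff_inv, hcc, inv_one, one_mul]
    show a 0 = 0
    exact a_zero
  · rw [map_mul, PowerSeries.constantCoeff_inv, hcc, inv_one, one_mul, map_add,
      map_one]
    show a 0 + 1 = 1
    rw [a_zero, zero_add]
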